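/- Let q be the Midzuno–Sen-style proposal q(S_k) = g(S_k)/(C(n-2,k-2)·G) over k-subsets of an n-element set S, where g is a nonnegative pair-weight function with total G > 0. For a set R of t distinct vertices (t ≤ k), the inclusion probability π(R) = Pr_{S_k~q}(R ⊆ S_k) equals (1/(C(n-2,k-2)·G)) · [ C(n-t, k-t)·∑_{{a,b}⊆R} g(a,b) + C(n-t-1, k-t-1)·∑_{r∈R, x∉R} g(r,x) + C(n-t-2, k-t-2)·∑_{{x,y}⊆S∖R} g(x,y) ]. -/

import Mathlib

open Finset

/-- Sum of a symmetric pair function `g` over all unordered pairs of distinct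
elements of `T`. -/
noncomputable def pairSum {V : Type*} [DecidableEq V] (g : V → V → ℝ) (T : Finset V) : ℝ :=
  (∑ p ∈ T.offDiag, g p.1 p.2) / 2

lemma count_superset {V : Type*} [DecidableEq V] (S A : Finset V) (hA : A ⊆ S) (k : ℕ) :
    (((S.powersetCard k).filter (fun T => A ⊆ T)).card : ℕ)
      = if A.card ≤ k then (S.card - A.card).choose (k - A.card) else 0 := by
  split_ifs with hk
  · rw [← card_sdiff_of_subset hA, ← card_powersetCard]
    apply card_nbij' (fun T => T \ A) (fun T => T ∪ A)
    · intro T hT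
      simp only [mem_coe, mem_filter, mem_powersetCard] at hT ⊢
      obtain ⟨⟨hTS, hTk⟩, hAT⟩ := hT
      exact ⟨sdiff_subset_sdiff hTS le_rfl, by rw [card_sdiff_of_subset hAT, hTk]⟩
    · intro T hT
      simp only [mem_coe, mem_powersetCard, mem_filter] at hT ⊢
      obtain ⟨hTS, hTk⟩ := hT
      have hdisj : Disjoint T A := disjoint_of_subset_left hTS sdiff_disjoint
      refine ⟨⟨union_subset (hTS.trans sdiff_subset) hA, ?_⟩, subset_union_right⟩
      rw [card_union_of_disjoint hdisj, hTk]
      omega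
    · intro T hT
      simp only [mem_coe, mem_filter] at hT
      exact sdiff_union_of_subset hT.2
    · intro T hT
      simp only [mem_coe, mem_powersetCard] at hT
      exact union_sdiff_cancel_right (disjoint_of_subset_left hT.1 sdiff_disjoint)
  · rw [card_eq_zero, filter_eq_empty_iff]
    intro T hT hAT
    rw [mem_powersetCard] at hT
    exact hk ((card_le_card hAT).trans_eq hT.2)

/-- Inclusion probability under the Midzuno–Sen proposal
`q(S_k) = g(S_k)/(C(n-2,k-2)·G)`: for a set `R` of `t ≤ k` vertices,
`π(R) = (1/(C(n-2,k-2)·G)) · [ C(n-t,k-t)·∑_{{a,b}⊆R} g(a,b)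
  + C(n-t-1,k-t-1)·∑_{r∈R, x∉R} g(r,x) + C(n-t-2,k-t-2)·∑_{{x,y}⊆S∖R} g(x,y) ]`,
with binomial coefficients of negative lower index interpreted as `0`. -/
theorem midzuno_sen_inclusion_probability {V : Type*} [DecidableEq V] (S : Finset V)
    (n k t : ℕ) (hn : S.card = n) (hk2 : 2 ≤ k) (hkn : k ≤ n)
    (g : V → V → ℝ) (hgsym : ∀ u v, g u v = g v u) (hg0 : ∀ u v, 0 ≤ g u v)
    (hG : 0 < pairSum g S)
    (R : Finset V) (hR : R ⊆ S) (ht : R.card = t) (htk : t ≤ k) :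
    (∑ T ∈ (S.powersetCard k).filter (fun T => R ⊆ T),
        pairSum g T / (((n - 2).choose (k - 2) : ℝ) * pairSum g S))
      = (1 / (((n - 2).choose (k - 2) : ℝ) * pairSum g S))
          * (((n - t).choose (k - t) : ℝ) * pairSum g R
            + (if t + 1 ≤ k then ((n - t - 1).choose (k - t - 1) : ℝ) else 0)
                * (∑ r ∈ R, ∑ x ∈ S \ R, g r x)
            + (if t + 2 ≤ k then ((n - t - 2).choose (k - t - 2) : ℝ) else 0)
                * pairSum g (S \ R)) := by
  classical
  set F := (S.powersetCard k).filter (fun T => R ⊆ T) with hF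
  -- the count of k-subsets containing R and a given pair
  have hcard : ∀ p : V × V, p ∈ S.offDiag →
      ((F.filter (fun T => p.1 ∈ T ∧ p.2 ∈ T)).card : ℕ)
        = if (R ∪ {p.1, p.2}).card ≤ k
            then (n - (R ∪ {p.1, p.2}).card).choose (k - (R ∪ {p.1, p.2}).card) else 0 := by
    intro p hp
    rw [mem_offDiag] at hp
    have hsub : R ∪ {p.1, p.2} ⊆ S := by
      refine union_subset hR ?_
      intro x hx
      simp only [mem_insert, mem_singleton] at hx
      rcases hx with h | h <;> subst h
      · exact hp.1
      · exact hp.2.1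
    have := count_superset S (R ∪ {p.1, p.2}) hsub k
    rw [hn] at this
    rw [← this, hF, filter_filter]
    congr 1
    refine filter_congr fun T hT => ?_
    simp [union_subset_iff, insert_subset_iff, and_assoc]
    tauto
  -- main unscaled identity
  have key : ∑ T ∈ F, ∑ p ∈ T.offDiag, g p.1 p.2
      = ∑ p ∈ S.offDiag,
          ((F.filter (fun T => p.1 ∈ T ∧ p.2 ∈ T)).card : ℝ) * g p.1 p.2 := by
    have hstep : ∀ T ∈ F, ∑ p ∈ T.offDiag, g p.1 p.2
        = ∑ p ∈ S.offDiag, if p.1 ∈ T ∧ p.2 ∈ T then g p.1 p.2 else 0 := by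
      intro T hT
      have hTS : T ⊆ S := (mem_powersetCard.1 (mem_filter.1 hT).1).1
      rw [← sum_filter]
      congr 1
      ext q
      simp only [mem_filter, mem_offDiag]
      constructor
      · rintro ⟨h1, h2, h3⟩; exact ⟨⟨hTS h1, hTS h2, h3⟩, h1, h2⟩
      · rintro ⟨⟨_, _, h3⟩, h1, h2⟩; exact ⟨h1, h2, h3⟩
    rw [sum_congr rfl hstep, sum_comm]
    refine sum_congr rfl fun p _ => ?_
    rw [sum_ite, sum_const_zero, add_zero, sum_const, nsmul_eq_mul]
  -- decompose S.offDiag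
  have hdecomp : S.offDiag
      = (R.offDiag ∪ (S \ R).offDiag) ∪ (R ×ˢ (S \ R) ∪ (S \ R) ×ˢ R) := by
    ext ⟨a, b⟩
    simp only [mem_offDiag, mem_union, mem_sdiff, mem_product]
    constructor
    · rintro ⟨haS, hbS, hne⟩
      by_cases haR : a ∈ R <;> by_cases hbR : b ∈ R
      · exact Or.inl (Or.inl ⟨haR, hbR, hne⟩)
      · exact Or.inr (Or.inl ⟨haR, hbS, hbR⟩)
      · exact Or.inr (Or.inr ⟨⟨haS, haR⟩, hbR⟩)
      · exact Or.inl (Or.inr ⟨⟨haS, haR⟩, ⟨hbS, hbR⟩, hne⟩)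
    · rintro ((⟨h1, h2, h3⟩ | ⟨⟨h1, h1'⟩, ⟨h2, h2'⟩, h3⟩) | (⟨h1, h2, h2'⟩ | ⟨⟨h1, h1'⟩, h2⟩))
      · exact ⟨hR h1, hR h2, h3⟩
      · exact ⟨h1, h2, h3⟩
      · exact ⟨hR h1, h2, fun e => h2' (e ▸ h1)⟩
      · exact ⟨h1, hR h2, fun e => h1' (e ▸ h2)⟩
  have d1 : Disjoint R.offDiag (S \ R).offDiag := by
    rw [disjoint_left]; rintro ⟨a, b⟩ h1 h2
    simp only [mem_offDiag, mem_sdiff] at h1 h2; tauto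
  have d3 : Disjoint (R ×ˢ (S \ R)) ((S \ R) ×ˢ R) := by
    rw [disjoint_left]; rintro ⟨a, b⟩ h1 h2
    simp only [mem_product, mem_sdiff] at h1 h2; tauto
  have d2 : Disjoint (R.offDiag ∪ (S \ R).offDiag) (R ×ˢ (S \ R) ∪ (S \ R) ×ˢ R) := by
    rw [disjoint_left]; rintro ⟨a, b⟩ h1 h2
    simp only [mem_union, mem_offDiag, mem_product, mem_sdiff] at h1 h2; tauto
  -- constant counts on each piece
  have hc0 : ∀ p ∈ R.offDiag,
      ((F.filter (fun T => p.1 ∈ T ∧ p.2 ∈ T)).card : ℝ) * g p.1 p.2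
        = ((n - t).choose (k - t) : ℝ) * g p.1 p.2 := by
    rintro ⟨a, b⟩ hp
    rw [mem_offDiag] at hp
    have hpS : (a, b) ∈ S.offDiag := mem_offDiag.2 ⟨hR hp.1, hR hp.2.1, hp.2.2⟩
    have := hcard (a, b) hpS
    have hU : R ∪ {a, b} = R := union_eq_left.2 (by
      intro x hx; simp only [mem_insert, mem_singleton] at hx
      rcases hx with h | h <;> subst h
      · exact hp.1
      · exact hp.2.1)
    rw [hU, ht, if_pos htk] at this
    rw [this]
  have hc1 : ∀ p ∈ R ×ˢ (S \ R),
      ((F.filter (fun T => p.1 ∈ T ∧ p.2 ∈ T)).card : ℝ) * g p.1 p.2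
        = (if t + 1 ≤ k then ((n - t - 1).choose (k - t - 1) : ℝ) else 0) * g p.1 p.2 := by
    rintro ⟨a, b⟩ hp
    rw [mem_product, mem_sdiff] at hp
    obtain ⟨haR, hbS, hbR⟩ := hp
    have hpS : (a, b) ∈ S.offDiag :=
      mem_offDiag.2 ⟨hR haR, hbS, fun e => hbR (e ▸ haR)⟩
    have := hcard (a, b) hpS
    have hU : R ∪ {a, b} = insert b R := by
      ext x
      simp only [mem_union, mem_insert, mem_singleton]
      constructor
      · rintro (h | h | h)
        · exact Or.inr h
        · exact Or.inr (h ▸ haR)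
        · exact Or.inl h
      · rintro (h | h)
        · exact Or.inr (Or.inr h)
        · exact Or.inl h
    rw [hU, card_insert_of_notMem hbR, ht] at this
    rw [this]
    congr 1
    split_ifs with h
    · push_cast
      congr 2 <;> omega
    · simp
  have hc2 : ∀ p ∈ (S \ R) ×ˢ R,
      ((F.filter (fun T => p.1 ∈ T ∧ p.2 ∈ T)).card : ℝ) * g p.1 p.2
        = (if t + 1 ≤ k then ((n - t - 1).choose (k - t - 1) : ℝ) else 0) * g p.1 p.2 := by
    rintro ⟨a, b⟩ hp
    rw [mem_product, mem_sdiff] at hp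
    obtain ⟨⟨haS, haR⟩, hbR⟩ := hp
    have hpS : (a, b) ∈ S.offDiag :=
      mem_offDiag.2 ⟨haS, hR hbR, fun e => haR (e ▸ hbR)⟩
    have := hcard (a, b) hpS
    have hU : R ∪ {a, b} = insert a R := by
      ext x
      simp only [mem_union, mem_insert, mem_singleton]
      constructor
      · rintro (h | h | h)
        · exact Or.inr h
        · exact Or.inl h
        · exact Or.inr (h ▸ hbR)
      · rintro (h | h)
        · exact Or.inr (Or.inl h)
        · exact Or.inl h
    rw [hU, card_insert_of_notMem haR, ht] at this
    rw [this]
    congr 1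
    split_ifs with h
    · push_cast
      congr 2 <;> omega
    · simp
  have hc3 : ∀ p ∈ (S \ R).offDiag,
      ((F.filter (fun T => p.1 ∈ T ∧ p.2 ∈ T)).card : ℝ) * g p.1 p.2
        = (if t + 2 ≤ k then ((n - t - 2).choose (k - t - 2) : ℝ) else 0) * g p.1 p.2 := by
    rintro ⟨a, b⟩ hp
    rw [mem_offDiag, mem_sdiff, mem_sdiff] at hp
    obtain ⟨⟨haS, haR⟩, ⟨hbS, hbR⟩, hab⟩ := hp
    have hpS : (a, b) ∈ S.offDiag := mem_offDiag.2 ⟨haS, hbS, hab⟩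
    have := hcard (a, b) hpS
    have hU : (R ∪ {a, b}).card = t + 2 := by
      rw [union_comm]
      rw [card_union_of_disjoint (by
        simp only [disjoint_left, mem_insert, mem_singleton]
        rintro x (h | h) <;> subst h <;> assumption)]
      rw [ht, card_insert_of_notMem (by simpa using hab), card_singleton]
      omega
    rw [hU] at this
    rw [this]
    congr 1
    split_ifs with h
    · push_cast
      congr 2 <;> omega
    · simp
  -- symmetry of mixed sums
  have hmix : ∑ p ∈ (S \ R) ×ˢ R, g p.1 p.2 = ∑ p ∈ R ×ˢ (S \ R), g p.1 p.2 := by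
    rw [sum_product, sum_product, Finset.sum_comm]
    exact sum_congr rfl fun r _ => sum_congr rfl fun x _ => hgsym x r
  have hprod : ∑ p ∈ R ×ˢ (S \ R), g p.1 p.2 = ∑ r ∈ R, ∑ x ∈ S \ R, g r x := by
    rw [sum_product]
  -- put it together
  have key2 : ∑ T ∈ F, pairSum g T
      = ((n - t).choose (k - t) : ℝ) * pairSum g R
        + (if t + 1 ≤ k then ((n - t - 1).choose (k - t - 1) : ℝ) else 0)
            * (∑ r ∈ R, ∑ x ∈ S \ R, g r x)
        + (if t + 2 ≤ k then ((n - t - 2).choose (k - t - 2) : ℝ) else 0)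
            * pairSum g (S \ R) := by
    have : ∑ T ∈ F, pairSum g T = (∑ T ∈ F, ∑ p ∈ T.offDiag, g p.1 p.2) / 2 := by
      rw [sum_div]; rfl
    rw [this, key, hdecomp, sum_union d2, sum_union d1, sum_union d3,
      sum_congr rfl hc0, sum_congr rfl hc3, sum_congr rfl hc1, sum_congr rfl hc2,
      ← mul_sum, ← mul_sum, ← mul_sum, ← mul_sum, hmix, hprod]
    unfold pairSum
    ring
  rw [← sum_div, key2, one_div, div_eq_mul_inv]
  ring
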